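/- For any k-by-n binary matrix P with output random variable X of the constant-action X-program (P, θ), and any s ∈ F_2^n: 2·P(X·sᵀ=0) − 1 = Σ_{w=0}^{n_s} cos(2θ(n_s − 2w))·P(wt(c) = w | c ~ C_s uniform), where C_s and n_s are as usual. -/

import Mathlib

/-- Hamming weight of a binary vector: number of coordinates equal to 1. -/
def wt {ι : Type*} [Fintype ι] (a : ι → ZMod 2) : ℕ :=
  (Finset.univ.filter fun i => a i = 1).card

/-- Output distribution of the constant-action X-program given by the k-by-n binary
matrix `P` with action `θ`: `P(X = x)`. -/
noncomputable def XProb {k n : ℕ} (P : Matrix (Fin k) (Fin n) (ZMod 2)) (θ : ℝ)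
    (x : Fin n → ZMod 2) : ℝ :=
  ‖∑ a ∈ Finset.univ.filter (fun a : Fin k → ZMod 2 => Matrix.vecMul a P = x),
    (Real.cos θ : ℂ) ^ (k - wt a) * (Complex.I * Real.sin θ) ^ (wt a)‖ ^ 2

/-- The bias of the X-program output distribution in direction `s`:
`P(X ⬝ sᵀ = 0)`, the probability that the output is orthogonal to `s` over `F₂`. -/
noncomputable def bias {k n : ℕ} (P : Matrix (Fin k) (Fin n) (ZMod 2)) (θ : ℝ)
    (s : Fin n → ZMod 2) : ℝ :=
  ∑ x ∈ Finset.univ.filter (fun x : Fin n → ZMod 2 => dotProduct x s = 0), XProb P θ x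

/-- The code `C_s`: the column span of the submatrix `P_s` of `P` consisting of the rows
not orthogonal to `s`. -/
def Cs {k n : ℕ} (P : Matrix (Fin k) (Fin n) (ZMod 2)) (s : Fin n → ZMod 2) :
    Finset ({i : Fin k // dotProduct (P i) s = 1} → ZMod 2) :=
  Finset.image (fun d : Fin n → ZMod 2 => fun i => dotProduct (P i.1) d) Finset.univ

open Finset

noncomputable def chi (z : ZMod 2) : ℂ := (-1) ^ z.val

lemma val01 : (ZMod.val (0 : ZMod 2)) = 0 := rfl
lemma val11 : (ZMod.val (1 : ZMod 2)) = 1 := rfl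
lemma val21 : (ZMod.val (2 : ZMod 2)) = 0 := rfl
lemma val111 : (ZMod.val ((1:ZMod 2) + 1)) = 0 := rfl

lemma chi_zero : chi 0 = 1 := by simp [chi, val01]
lemma chi_one : chi 1 = -1 := by simp [chi, val11]

lemma chi_add (z w : ZMod 2) : chi (z + w) = chi z * chi w := by
  rcases (by revert z; decide : z = 0 ∨ z = 1) with rfl | rfl <;>
    rcases (by revert w; decide : w = 0 ∨ w = 1) with rfl | rfl <;> simp [chi, val01, val11, val21, val111]

lemma chi_mul (a b : ZMod 2) : chi (a * b) = chi b ^ a.val := by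
  rcases (by revert a; decide : a = 0 ∨ a = 1) with rfl | rfl <;>
    rcases (by revert b; decide : b = 0 ∨ b = 1) with rfl | rfl <;> simp [chi, val01, val11, val21]

lemma chi_sum {ι : Type*} (s : Finset ι) (f : ι → ZMod 2) :
    chi (∑ i ∈ s, f i) = ∏ i ∈ s, chi (f i) := by
  induction s using Finset.cons_induction with
  | empty => simp [chi_zero]
  | cons i s hi ih => simp [Finset.sum_cons, Finset.prod_cons, chi_add, ih]

lemma conj_chi (z : ZMod 2) : (starRingEnd ℂ) (chi z) = chi z := by
  simp [chi]

lemma sum_zmod2 {M : Type*} [AddCommMonoid M] (f : ZMod 2 → M) : ∑ v, f v = f 0 + f 1 :=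
  Fin.sum_univ_two f

lemma chi_real (z : ZMod 2) : chi z = ((-1 : ℝ) ^ z.val : ℝ) := by
  simp [chi]


lemma zmod2_ne_one {v : ZMod 2} (h : ¬ v = 1) : v = 0 := by revert h; revert v; decide

noncomputable def g (θ : ℝ) (v : ZMod 2) : ℂ :=
  if v = 0 then (Real.cos θ : ℂ) else Complex.I * Real.sin θ

lemma prod_g {k : ℕ} (θ : ℝ) (a : Fin k → ZMod 2) :
    ∏ j, g θ (a j) = (Real.cos θ : ℂ) ^ (k - wt a) * (Complex.I * Real.sin θ) ^ (wt a) := by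
  rw [← Finset.prod_filter_mul_prod_filter_not Finset.univ (fun j => a j = 1)]
  have h1 : ∀ j ∈ Finset.univ.filter (fun j => a j = 1), g θ (a j) = Complex.I * Real.sin θ := by
    intro j hj
    simp only [Finset.mem_filter] at hj
    simp [g, hj.2]
  have h2 : ∀ j ∈ Finset.univ.filter (fun j => ¬ a j = 1), g θ (a j) = (Real.cos θ : ℂ) := by
    intro j hj
    simp only [Finset.mem_filter] at hj
    simp [g, zmod2_ne_one hj.2]
  rw [Finset.prod_congr rfl h1, Finset.prod_congr rfl h2, Finset.prod_const, Finset.prod_const]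
  have hcard : (Finset.univ.filter (fun j => ¬ a j = 1)).card = k - wt a := by
    have := Finset.card_filter_add_card_filter_not (s := (Finset.univ : Finset (Fin k)))
      (p := fun j => a j = 1)
    simp only [Finset.card_univ, Fintype.card_fin] at this
    simp only [wt]
    omega
  rw [hcard, mul_comm]
  rfl

lemma dot_vecMul {k n : ℕ} (P : Matrix (Fin k) (Fin n) (ZMod 2)) (a : Fin k → ZMod 2)
    (t : Fin n → ZMod 2) :
    dotProduct (Matrix.vecMul a P) t = ∑ j, a j * dotProduct (P j) t := by
  rw [← Matrix.dotProduct_mulVec]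
  rfl

lemma amp {k n : ℕ} (P : Matrix (Fin k) (Fin n) (ZMod 2)) (θ : ℝ) (t : Fin n → ZMod 2) :
    ∑ a : Fin k → ZMod 2, chi (dotProduct (Matrix.vecMul a P) t) * ∏ j, g θ (a j)
      = ∏ j, ((Real.cos θ : ℂ) + chi (dotProduct (P j) t) * (Complex.I * Real.sin θ)) := by
  have h1 : ∀ a : Fin k → ZMod 2,
      chi (dotProduct (Matrix.vecMul a P) t) * ∏ j, g θ (a j)
        = ∏ j, (chi (dotProduct (P j) t) ^ (a j).val * g θ (a j)) := by
    intro a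
    rw [dot_vecMul, chi_sum]
    rw [← Finset.prod_mul_distrib]
    congr 1
    ext j
    rw [chi_mul]
  rw [Finset.sum_congr rfl (fun a _ => h1 a)]
  have key := Finset.prod_univ_sum (t := fun _ : Fin k => (Finset.univ : Finset (ZMod 2)))
    (f := fun j v => chi (dotProduct (P j) t) ^ v.val * g θ v)
  rw [← Fintype.piFinset_univ, ← key]
  congr 1
  ext j
  rw [sum_zmod2 (fun v => chi (dotProduct (P j) t) ^ v.val * g θ v)]
  simp [g, val01, val11]

lemma zmod2_ne_zero {v : ZMod 2} (h : ¬ v = 0) : v = 1 := by revert h; revert v; decide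

lemma orth0 {n : ℕ} (u : Fin n → ZMod 2) :
    ∑ y : Fin n → ZMod 2, chi (dotProduct u y) = if u = 0 then (2:ℂ)^n else 0 := by
  have h1 : ∀ y : Fin n → ZMod 2, chi (dotProduct u y) = ∏ j, chi (u j * y j) := by
    intro y
    rw [dotProduct, chi_sum]
  rw [Finset.sum_congr rfl (fun y _ => h1 y)]
  have key := Finset.prod_univ_sum (t := fun _ : Fin n => (Finset.univ : Finset (ZMod 2)))
    (f := fun j c => chi (u j * c))
  rw [← Fintype.piFinset_univ, ← key]
  have h2 : ∀ j, ∑ c : ZMod 2, chi (u j * c) = 1 + chi (u j) := by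
    intro j
    rw [sum_zmod2 (fun c => chi (u j * c))]
    simp [chi_zero]
  rw [Finset.prod_congr rfl (fun j _ => h2 j)]
  by_cases hu : u = 0
  · subst hu
    simp [chi_zero]
    norm_num
  · rw [if_neg hu]
    obtain ⟨j, hj⟩ : ∃ j, u j ≠ 0 := by
      by_contra h
      push_neg at h
      exact hu (funext h)
    refine Finset.prod_eq_zero (Finset.mem_univ j) ?_
    rw [zmod2_ne_zero hj, chi_one]
    ring

lemma zmod2_add_self (z : ZMod 2) : z + z = 0 := by revert z; decide

lemma add_self_zmod2_vec {n : ℕ} (v : Fin n → ZMod 2) : v + v = 0 := by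
  funext j
  exact zmod2_add_self (v j)


lemma zmod2_cases (z : ZMod 2) : z = 0 ∨ z = 1 := by revert z; decide

lemma factor_lemma (θ : ℝ) (u v : ZMod 2) :
    ((Real.cos θ:ℂ) + chi (u + v) * (Complex.I * Real.sin θ)) *
      ((Real.cos θ:ℂ) - chi v * (Complex.I * Real.sin θ))
    = if u = 1 then ((Real.cos (2*θ):ℂ) - chi v * (Complex.I * Real.sin (2*θ))) else 1 := by
  have hpy : (Real.sin θ:ℂ)^2 + (Real.cos θ:ℂ)^2 = 1 := by
    exact_mod_cast Real.sin_sq_add_cos_sq θ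
  have h2 : ((Real.cos (2*θ)) : ℂ) = (Real.cos θ:ℂ)^2 - (Real.sin θ:ℂ)^2 := by
    have h2r : Real.cos (2*θ) = Real.cos θ^2 - Real.sin θ^2 := by
      rw [Real.cos_two_mul]
      nlinarith [Real.sin_sq_add_cos_sq θ]
    exact_mod_cast h2r
  have h3 : ((Real.sin (2*θ)) : ℂ) = 2 * (Real.sin θ:ℂ) * (Real.cos θ:ℂ) := by
    exact_mod_cast Real.sin_two_mul θ
  have hI : Complex.I^2 = -1 := Complex.I_sq
  rcases zmod2_cases u with rfl | rfl <;> rcases zmod2_cases v with rfl | rfl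
  · simp only [show (0:ZMod 2) + 0 = 0 from rfl, chi_zero, if_neg (by decide : ¬(0:ZMod 2) = 1)]
    linear_combination hpy - (Real.sin θ:ℂ)^2 * hI
  · simp only [show (0:ZMod 2) + 1 = 1 from rfl, chi_one, if_neg (by decide : ¬(0:ZMod 2) = 1)]
    linear_combination hpy - (Real.sin θ:ℂ)^2 * hI
  · simp only [show (1:ZMod 2) + 0 = 1 from rfl, chi_zero, chi_one]
    simp only [if_true]
    rw [h2, h3]
    linear_combination (Real.sin θ:ℂ)^2 * hI
  · simp only [show (1:ZMod 2) + 1 = 0 from rfl, chi_zero, chi_one]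
    simp only [if_true]
    rw [h2, h3]
    linear_combination (Real.sin θ:ℂ)^2 * hI

lemma factor_exp (θ : ℝ) (v : ZMod 2) :
    (Real.cos (2*θ):ℂ) - chi v * (Complex.I * Real.sin (2*θ))
      = Complex.exp (((2*θ*(2*(v.val:ℝ)-1)) : ℝ) * Complex.I) := by
  rw [Complex.exp_mul_I, ← Complex.ofReal_cos, ← Complex.ofReal_sin]
  rcases zmod2_cases v with rfl | rfl
  · rw [val01, chi_zero,
      show 2*θ*(2*((0:ℕ):ℝ)-1) = -(2*θ) by push_cast; ring, Real.cos_neg, Real.sin_neg]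
    push_cast
    ring
  · rw [val11, chi_one,
      show 2*θ*(2*((1:ℕ):ℝ)-1) = 2*θ by push_cast; ring]
    push_cast
    ring

lemma sum_val_eq_wt {ι : Type*} [Fintype ι] (c : ι → ZMod 2) :
    ∑ i, (c i).val = wt c := by
  rw [wt, Finset.card_filter]
  refine Finset.sum_congr rfl (fun i _ => ?_)
  rcases zmod2_cases (c i) with h | h <;> rw [h]
  · rw [val01, if_neg (by decide : ¬(0:ZMod 2) = 1)]
  · rw [val11, if_pos rfl]

lemma prod_factor {ι : Type*} [Fintype ι] (θ : ℝ) (c : ι → ZMod 2) :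
    ∏ i, ((Real.cos (2*θ):ℂ) - chi (c i) * (Complex.I * Real.sin (2*θ)))
      = Complex.exp (((2*θ*(2*(wt c:ℝ) - (Fintype.card ι : ℝ))) : ℝ) * Complex.I) := by
  rw [Finset.prod_congr rfl (fun i _ => factor_exp θ (c i)), ← Complex.exp_sum]
  congr 1
  rw [← Finset.sum_mul]
  congr 1
  rw [← Complex.ofReal_sum]
  congr 1
  rw [Finset.sum_congr rfl (fun i (_ : i ∈ Finset.univ) =>
    show 2*θ*(2*((c i).val:ℝ)-1) = 2*θ*2*((c i).val:ℝ) - 2*θ by ring)]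
  rw [Finset.sum_sub_distrib, ← Finset.mul_sum, Finset.sum_const, Finset.card_univ,
    nsmul_eq_mul]
  have hv : (∑ i, ((c i).val:ℝ)) = (wt c : ℝ) := by
    rw [← sum_val_eq_wt c]
    push_cast
    rfl
  rw [hv]
  ring

lemma vecadd_eq_zero_iff {n : ℕ} (v w : Fin n → ZMod 2) : v + w = 0 ↔ v = w := by
  constructor
  · intro h
    have := congrArg (· + w) h
    simpa [add_assoc, add_self_zmod2_vec w] using this
  · rintro rfl
    exact add_self_zmod2_vec v

lemma orth_pair {n : ℕ} (v w : Fin n → ZMod 2) :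
    ∑ y : Fin n → ZMod 2, chi (dotProduct v y) * chi (dotProduct w y)
      = if v = w then (2:ℂ)^n else 0 := by
  have h1 : ∀ y, chi (dotProduct v y) * chi (dotProduct w y)
      = chi (dotProduct (v + w) y) := by
    intro y
    rw [add_dotProduct, chi_add]
  rw [Finset.sum_congr rfl (fun y _ => h1 y), orth0]
  congr 1
  simp [vecadd_eq_zero_iff]

noncomputable def cfun {k n : ℕ} (P : Matrix (Fin k) (Fin n) (ZMod 2)) (s : Fin n → ZMod 2)
    (y : Fin n → ZMod 2) : {i : Fin k // dotProduct (P i) s = 1} → ZMod 2 :=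
  fun i => dotProduct (P i.1) y

lemma prod_over_rows {k n : ℕ} (P : Matrix (Fin k) (Fin n) (ZMod 2)) (θ : ℝ)
    (s y : Fin n → ZMod 2) :
    ∏ j, (((Real.cos θ:ℂ) + chi (dotProduct (P j) (s + y)) * (Complex.I * Real.sin θ)) *
          ((Real.cos θ:ℂ) - chi (dotProduct (P j) y) * (Complex.I * Real.sin θ)))
      = Complex.exp (((2*θ*(2*(wt (cfun P s y):ℝ)
          - (Fintype.card {i : Fin k // dotProduct (P i) s = 1} : ℝ))) : ℝ) * Complex.I) := by
  have h1 : ∀ j, dotProduct (P j) (s + y)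
      = dotProduct (P j) s + dotProduct (P j) y := fun j => dotProduct_add _ _ _
  have h2 : ∀ j (_ : j ∈ Finset.univ),
      (((Real.cos θ:ℂ) + chi (dotProduct (P j) (s + y)) * (Complex.I * Real.sin θ)) *
       ((Real.cos θ:ℂ) - chi (dotProduct (P j) y) * (Complex.I * Real.sin θ)))
      = if dotProduct (P j) s = 1
          then ((Real.cos (2*θ):ℂ) - chi (dotProduct (P j) y) * (Complex.I * Real.sin (2*θ)))
          else 1 := by
    intro j _
    rw [h1 j]
    exact factor_lemma θ _ _
  rw [Finset.prod_congr rfl h2, ← Finset.prod_filter,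
    Finset.prod_subtype (Finset.univ.filter (fun j => dotProduct (P j) s = 1))
      (p := fun j => dotProduct (P j) s = 1) (by simp)
      (fun j => ((Real.cos (2*θ):ℂ) - chi (dotProduct (P j) y) * (Complex.I * Real.sin (2*θ))))]
  exact prod_factor θ (cfun P s y)

lemma conj_factor (θ : ℝ) (v : ZMod 2) :
    (starRingEnd ℂ) ((Real.cos θ:ℂ) + chi v * (Complex.I * Real.sin θ))
      = (Real.cos θ:ℂ) - chi v * (Complex.I * Real.sin θ) := by
  rw [map_add, map_mul, map_mul, conj_chi, Complex.conj_I, Complex.conj_ofReal,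
    Complex.conj_ofReal]
  ring

lemma core {k n : ℕ} (P : Matrix (Fin k) (Fin n) (ZMod 2)) (θ : ℝ) (s : Fin n → ZMod 2) :
    ∑ x : Fin n → ZMod 2, chi (dotProduct x s) *
        ((∑ a ∈ Finset.univ.filter (fun a : Fin k → ZMod 2 => Matrix.vecMul a P = x),
            ∏ j, g θ (a j)) *
         (starRingEnd ℂ) (∑ a ∈ Finset.univ.filter (fun a : Fin k → ZMod 2 => Matrix.vecMul a P = x),
            ∏ j, g θ (a j)))
      = (2^n : ℂ)⁻¹ * ∑ y : Fin n → ZMod 2,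
          Complex.exp (((2*θ*(2*(wt (cfun P s y):ℝ)
            - (Fintype.card {i : Fin k // dotProduct (P i) s = 1} : ℝ))) : ℝ) * Complex.I) := by
  set F : (Fin k → ZMod 2) → ℂ := fun a => ∏ j, g θ (a j) with hF
  calc
    ∑ x : Fin n → ZMod 2, chi (dotProduct x s) *
        ((∑ a ∈ Finset.univ.filter (fun a => Matrix.vecMul a P = x), F a) *
         (starRingEnd ℂ) (∑ a ∈ Finset.univ.filter (fun a => Matrix.vecMul a P = x), F a))
      = ∑ x : Fin n → ZMod 2, ∑ a : Fin k → ZMod 2, (if Matrix.vecMul a P = x then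
          (∑ b : Fin k → ZMod 2, (if Matrix.vecMul b P = x then
            chi (dotProduct x s) * (F a * (starRingEnd ℂ) (F b)) else 0)) else 0) := by
        refine Finset.sum_congr rfl fun x _ => ?_
        rw [map_sum, Finset.sum_mul_sum, Finset.mul_sum]
        rw [Finset.sum_filter]
        refine Finset.sum_congr rfl fun a _ => ?_
        by_cases ha : Matrix.vecMul a P = x
        · rw [if_pos ha, if_pos ha, Finset.mul_sum, Finset.sum_filter]
        · rw [if_neg ha, if_neg ha]
    _ = ∑ a : Fin k → ZMod 2, ∑ b : Fin k → ZMod 2,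
          (if Matrix.vecMul b P = Matrix.vecMul a P then
            chi (dotProduct (Matrix.vecMul a P) s) * (F a * (starRingEnd ℂ) (F b)) else 0) := by
        rw [Finset.sum_comm]
        refine Finset.sum_congr rfl fun a _ => ?_
        rw [Finset.sum_ite_eq]
        rw [if_pos (Finset.mem_univ _)]
    _ = (2^n : ℂ)⁻¹ * ∑ a : Fin k → ZMod 2, ∑ b : Fin k → ZMod 2, ∑ y : Fin n → ZMod 2,
          (chi (dotProduct (Matrix.vecMul b P) y) * chi (dotProduct (Matrix.vecMul a P) y)) *
            (chi (dotProduct (Matrix.vecMul a P) s) * (F a * (starRingEnd ℂ) (F b))) := by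
        rw [Finset.mul_sum]
        refine Finset.sum_congr rfl fun a _ => ?_
        rw [Finset.mul_sum]
        refine Finset.sum_congr rfl fun b _ => ?_
        rw [← Finset.sum_mul, orth_pair]
        by_cases hb : Matrix.vecMul b P = Matrix.vecMul a P
        · rw [if_pos hb, if_pos hb,
            inv_mul_cancel_left₀ (pow_ne_zero n (two_ne_zero : (2:ℂ) ≠ 0))]
        · rw [if_neg hb, if_neg hb]
          simp
    _ = (2^n : ℂ)⁻¹ * ∑ y : Fin n → ZMod 2,
          ((∑ a : Fin k → ZMod 2, chi (dotProduct (Matrix.vecMul a P) (s + y)) * F a) *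
           (starRingEnd ℂ) (∑ b : Fin k → ZMod 2,
             chi (dotProduct (Matrix.vecMul b P) y) * F b)) := by
        congr 1
        rw [Finset.sum_comm]
        rw [Finset.sum_congr rfl (fun b (_ : b ∈ (Finset.univ : Finset (Fin k → ZMod 2))) =>
          Finset.sum_comm)]
        rw [Finset.sum_comm]
        refine Finset.sum_congr rfl fun y _ => ?_
        rw [map_sum, Finset.sum_mul_sum, Finset.sum_comm]
        refine Finset.sum_congr rfl fun b _ => ?_
        refine Finset.sum_congr rfl fun a _ => ?_
        rw [dotProduct_add, chi_add, map_mul, conj_chi]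
        ring
    _ = (2^n : ℂ)⁻¹ * ∑ y : Fin n → ZMod 2,
          Complex.exp (((2*θ*(2*(wt (cfun P s y):ℝ)
            - (Fintype.card {i : Fin k // dotProduct (P i) s = 1} : ℝ))) : ℝ)
              * Complex.I) := by
        congr 1
        refine Finset.sum_congr rfl fun y _ => ?_
        rw [hF]
        rw [amp P θ (s+y), amp P θ y, map_prod]
        rw [Finset.prod_congr rfl (fun j (_ : j ∈ (Finset.univ : Finset (Fin k))) =>
          conj_factor θ (dotProduct (P j) y))]
        rw [← Finset.prod_mul_distrib]
        exact prod_over_rows P θ s y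


lemma XProb_eq_normSq {k n : ℕ} (P : Matrix (Fin k) (Fin n) (ZMod 2)) (θ : ℝ)
    (x : Fin n → ZMod 2) :
    XProb P θ x = Complex.normSq
      (∑ a ∈ Finset.univ.filter (fun a : Fin k → ZMod 2 => Matrix.vecMul a P = x),
        ∏ j, g θ (a j)) := by
  rw [XProb, ← Complex.sq_norm]
  congr 2
  refine Finset.sum_congr rfl fun a _ => ?_
  rw [prod_g]

lemma master {k n : ℕ} (P : Matrix (Fin k) (Fin n) (ZMod 2)) (θ : ℝ) (s : Fin n → ZMod 2) :
    ∑ x : Fin n → ZMod 2, ((-1:ℝ) ^ (dotProduct x s).val) * XProb P θ x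
      = ((2:ℝ)^n)⁻¹ * ∑ y : Fin n → ZMod 2,
          Real.cos (2*θ*((Fintype.card {i : Fin k // dotProduct (P i) s = 1} : ℝ)
            - 2*(wt (cfun P s y) : ℝ))) := by
  set A : (Fin n → ZMod 2) → ℂ := fun x =>
    ∑ a ∈ Finset.univ.filter (fun a : Fin k → ZMod 2 => Matrix.vecMul a P = x),
      ∏ j, g θ (a j) with hA
  have hC : ((∑ x : Fin n → ZMod 2, ((-1:ℝ) ^ (dotProduct x s).val) * XProb P θ x : ℝ) : ℂ)
      = ∑ x : Fin n → ZMod 2, chi (dotProduct x s) * (A x * (starRingEnd ℂ) (A x)) := by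
    rw [Complex.ofReal_sum]
    refine Finset.sum_congr rfl fun x _ => ?_
    rw [XProb_eq_normSq, Complex.ofReal_mul, Complex.mul_conj]
    congr 1
    rw [chi]
    push_cast
    ring
  have h2 := hC.trans (core P θ s)
  have h3 := congrArg Complex.re h2
  rw [Complex.ofReal_re] at h3
  rw [h3]
  rw [show ((2:ℂ)^n)⁻¹ = ((((2:ℝ)^n)⁻¹ : ℝ) : ℂ) by push_cast; ring]
  rw [Complex.re_ofReal_mul]
  congr 1
  rw [Complex.re_sum]
  refine Finset.sum_congr rfl fun y _ => ?_
  rw [Complex.exp_ofReal_mul_I_re]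
  rw [show 2*θ*(2*(wt (cfun P s y):ℝ)
      - (Fintype.card {i : Fin k // dotProduct (P i) s = 1} : ℝ))
    = -(2*θ*((Fintype.card {i : Fin k // dotProduct (P i) s = 1} : ℝ)
      - 2*(wt (cfun P s y):ℝ))) by ring, Real.cos_neg]



lemma cfun_eq {k n : ℕ} (P : Matrix (Fin k) (Fin n) (ZMod 2)) (s y : Fin n → ZMod 2) :
    cfun P s y = (fun d : Fin n → ZMod 2 => fun i : {i : Fin k // dotProduct (P i) s = 1}
      => dotProduct (P i.1) d) y := rfl

lemma cfun_add {k n : ℕ} (P : Matrix (Fin k) (Fin n) (ZMod 2)) (s y z : Fin n → ZMod 2) :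
    cfun P s (y + z) = cfun P s y + cfun P s z := by
  funext i
  exact dotProduct_add _ _ _

lemma fiber_card {k n : ℕ} (P : Matrix (Fin k) (Fin n) (ZMod 2)) (s : Fin n → ZMod 2)
    {c : {i : Fin k // dotProduct (P i) s = 1} → ZMod 2} (hc : c ∈ Cs P s) :
    (Finset.univ.filter (fun y : Fin n → ZMod 2 => cfun P s y = c)).card
      = (Finset.univ.filter (fun y : Fin n → ZMod 2 => cfun P s y = 0)).card := by
  obtain ⟨y₀, _, hy₀⟩ := Finset.mem_image.mp hc
  have hcy₀ : cfun P s y₀ = c := hy₀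
  have hadd_self : ∀ c' : {i : Fin k // dotProduct (P i) s = 1} → ZMod 2, c' + c' = 0 := by
    intro c'
    funext i
    exact zmod2_add_self (c' i)
  refine Finset.card_bij' (fun y _ => y + y₀) (fun y _ => y + y₀) ?_ ?_ ?_ ?_
  · intro y hy
    simp only [Finset.mem_filter, Finset.mem_univ, true_and] at hy ⊢
    rw [cfun_add, hy, hcy₀, hadd_self]
  · intro y hy
    simp only [Finset.mem_filter, Finset.mem_univ, true_and] at hy ⊢
    rw [cfun_add, hy, hcy₀, zero_add]
  · intro y _
    show y + y₀ + y₀ = y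
    rw [add_assoc, add_self_zmod2_vec, add_zero]
  · intro y _
    show y + y₀ + y₀ = y
    rw [add_assoc, add_self_zmod2_vec, add_zero]


theorem two_bias_sub_one_eq_weight_dist {k n : ℕ} (P : Matrix (Fin k) (Fin n) (ZMod 2))
    (θ : ℝ) (s : Fin n → ZMod 2) :
    2 * bias P θ s - 1 =
      ∑ w ∈ Finset.range (Fintype.card {i : Fin k // dotProduct (P i) s = 1} + 1),
        Real.cos (2 * θ * ((Fintype.card {i : Fin k // dotProduct (P i) s = 1} : ℝ)
            - 2 * (w : ℝ))) *
          (((Cs P s).filter (fun c => wt c = w)).card / ((Cs P s).card : ℝ)) := by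
  have hcard_fun : Fintype.card (Fin n → ZMod 2) = 2^n := by
    rw [Fintype.card_fun, Fintype.card_fin, ZMod.card]
  -- T at s = 0 equals 1
  have hsum0 : ∑ x : Fin n → ZMod 2,
      ((-1:ℝ)^(dotProduct x (0 : Fin n → ZMod 2)).val) * XProb P θ x = 1 := by
    have h := master P θ (0 : Fin n → ZMod 2)
    have hm : Fintype.card {i : Fin k // dotProduct (P i) (0 : Fin n → ZMod 2) = 1} = 0 := by
      rw [Fintype.card_eq_zero_iff]
      refine ⟨fun i => ?_⟩
      have h2 := i.2
      rw [dotProduct_zero] at h2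
      exact absurd h2 (by decide)
    have hwt : ∀ y : Fin n → ZMod 2, wt (cfun P (0 : Fin n → ZMod 2) y) = 0 := by
      intro y
      have hle := Finset.card_filter_le (Finset.univ :
        Finset {i : Fin k // dotProduct (P i) (0 : Fin n → ZMod 2) = 1})
        (fun i => cfun P 0 y i = 1)
      rw [Finset.card_univ, hm] at hle
      exact Nat.le_zero.mp (le_trans (le_of_eq rfl) hle)
    rw [h]
    have : ∀ y ∈ (Finset.univ : Finset (Fin n → ZMod 2)),
        Real.cos (2*θ*((Fintype.card {i : Fin k //
          dotProduct (P i) (0 : Fin n → ZMod 2) = 1} : ℝ)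
            - 2*(wt (cfun P (0 : Fin n → ZMod 2) y) : ℝ))) = 1 := by
      intro y _
      rw [hwt y, hm]
      norm_num
    rw [Finset.sum_congr rfl this, Finset.sum_const, Finset.card_univ, hcard_fun,
      nsmul_eq_mul, mul_one]
    push_cast
    rw [inv_mul_cancel₀ (by positivity)]
  -- 2 * bias - 1 = T s
  have hbias : 2 * bias P θ s - 1
      = ∑ x : Fin n → ZMod 2, ((-1:ℝ)^(dotProduct x s).val) * XProb P θ x := by
    conv_lhs => rw [← hsum0]
    rw [bias, Finset.sum_filter, Finset.mul_sum, ← Finset.sum_sub_distrib]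
    refine Finset.sum_congr rfl fun x _ => ?_
    rw [dotProduct_zero, val01, pow_zero, one_mul]
    rcases zmod2_cases (dotProduct x s) with hz | hz <;> rw [hz]
    · rw [if_pos rfl, val01]
      ring
    · rw [if_neg (by decide : ¬(1:ZMod 2) = 0), val11]
      ring
  rw [hbias, master P θ s]
  -- grouping
  have himg : Finset.image (fun y : Fin n → ZMod 2 => cfun P s y) Finset.univ = Cs P s := rfl
  have hcomp := Finset.sum_comp
    (f := fun c : {i : Fin k // dotProduct (P i) s = 1} → ZMod 2 =>
      Real.cos (2*θ*((Fintype.card {i : Fin k // dotProduct (P i) s = 1} : ℝ)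
        - 2*(wt c : ℝ))))
    (g := fun y : Fin n → ZMod 2 => cfun P s y) (s := Finset.univ)
  rw [hcomp, himg]
  set K := (Finset.univ.filter (fun y : Fin n → ZMod 2 => cfun P s y = 0)).card with hK
  have hfib : ∀ c ∈ Cs P s,
      (Finset.univ.filter (fun y : Fin n → ZMod 2 => cfun P s y = c)).card = K :=
    fun c hc => fiber_card P s hc
  have hcard : (Cs P s).card * K = 2^n := by
    have hmem : ∀ y ∈ (Finset.univ : Finset (Fin n → ZMod 2)), cfun P s y ∈ Cs P s := by
      intro y _
      rw [← himg]
      exact Finset.mem_image_of_mem _ (Finset.mem_univ y)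
    have h := Finset.card_eq_sum_card_fiberwise hmem
    rw [Finset.card_univ, hcard_fun, Finset.sum_congr rfl hfib, Finset.sum_const,
      smul_eq_mul] at h
    exact h.symm
  have hCs0 : ((Cs P s).card : ℝ) ≠ 0 := by
    have : (Cs P s).Nonempty := ⟨_, Finset.mem_image_of_mem _ (Finset.mem_univ (0 : Fin n → ZMod 2))⟩
    exact_mod_cast Finset.card_ne_zero_of_mem this.choose_spec
  have hcardR : ((Cs P s).card : ℝ) * (K:ℝ) = 2^n := by exact_mod_cast hcard
  have hKr : ((2:ℝ)^n)⁻¹ * (K:ℝ) = (((Cs P s).card : ℝ))⁻¹ := by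
    field_simp
    linear_combination hcardR
  -- turn fiber cards into K and pull out
  have hstep : ∀ c ∈ Cs P s,
      (Finset.univ.filter (fun y : Fin n → ZMod 2 => cfun P s y = c)).card •
        Real.cos (2*θ*((Fintype.card {i : Fin k // dotProduct (P i) s = 1} : ℝ)
          - 2*(wt c : ℝ)))
      = (K:ℝ) * Real.cos (2*θ*((Fintype.card {i : Fin k // dotProduct (P i) s = 1} : ℝ)
          - 2*(wt c : ℝ))) := by
    intro c hc
    rw [hfib c hc, nsmul_eq_mul]
  rw [Finset.sum_congr rfl hstep, ← Finset.mul_sum, ← mul_assoc, hKr]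
  -- now group by weight
  have hcomp2 := Finset.sum_comp
    (f := fun w : ℕ =>
      Real.cos (2*θ*((Fintype.card {i : Fin k // dotProduct (P i) s = 1} : ℝ)
        - 2*(w : ℝ))))
    (g := fun c : {i : Fin k // dotProduct (P i) s = 1} → ZMod 2 => wt c)
    (s := Cs P s)
  rw [hcomp2]
  have hsub : (Cs P s).image (fun c => wt c)
      ⊆ Finset.range (Fintype.card {i : Fin k // dotProduct (P i) s = 1} + 1) := by
    intro w hw
    obtain ⟨c, _, rfl⟩ := Finset.mem_image.mp hw
    rw [Finset.mem_range]
    have := Finset.card_filter_le (Finset.univ :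
      Finset {i : Fin k // dotProduct (P i) s = 1}) (fun i => c i = 1)
    rw [Finset.card_univ] at this
    simp only [wt]
    omega
  rw [Finset.sum_subset hsub (fun w _ hnot => ?_)]
  · rw [Finset.mul_sum]
    refine Finset.sum_congr rfl fun w _ => ?_
    rw [nsmul_eq_mul]
    field_simp
  · have hempty : (Cs P s).filter (fun c => wt c = w) = ∅ := by
      rw [Finset.filter_eq_empty_iff]
      intro c hc hwc
      exact hnot (Finset.mem_image.mpr ⟨c, hc, hwc⟩)
    rw [hempty]
    simp
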